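/- There exists a constant ρ > 0 (one can take ρ = (2k/ω)^{1/2} where ω = min_{i,j}(VV^T)_{ij}) such that for every X ∈ OB^{n,k}_+, the distance from X to S^{n,k}_+ satisfies dist(X, S^{n,k}_+) ≤ ρ · (‖XV‖_F^2 − 1)^{1/2}, where V ∈ ℝ^{k×r} satisfies ‖V‖_F = 1 and all entries of VV^T are positive. -/

import Mathlib

open Matrix Finset

theorem stmt7_key_id (n k r : ℕ) (X : Matrix (Fin n) (Fin k) ℝ) (V : Matrix (Fin k) (Fin r) ℝ) :
    (∑ i, ∑ j, ((X * V) i j)^2) = ∑ a, ∑ b, (∑ i, X i a * X i b) * ((V * Vᵀ) a b) := by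
  have h1 : (∑ i, ∑ j, ((X * V) i j)^2) = Matrix.trace ((X*V)ᵀ * (X*V)) := by
    rw [Finset.sum_comm]
    simp only [Matrix.trace, Matrix.diag, Matrix.mul_apply, Matrix.transpose_apply, sq]
  have h2 : (X*V)ᵀ * (X*V) = Vᵀ * ((Xᵀ * X) * V) := by
    rw [Matrix.transpose_mul, Matrix.mul_assoc, Matrix.mul_assoc]
  have h3 : Matrix.trace ((X*V)ᵀ * (X*V)) = Matrix.trace ((Xᵀ*X) * (V * Vᵀ)) := by
    rw [h2, Matrix.trace_mul_comm, Matrix.mul_assoc]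
  rw [h1, h3]
  simp only [Matrix.trace, Matrix.diag, Matrix.mul_apply, Matrix.transpose_apply]
  exact Finset.sum_congr rfl fun a _ => Finset.sum_congr rfl fun b _ =>
    congrArg _ (Finset.sum_congr rfl fun j _ => mul_comm _ _)

theorem stmt_7 (n k r : ℕ) (V : Matrix (Fin k) (Fin r) ℝ)
    (hV : Real.sqrt (∑ i, ∑ j, (V i j) ^ 2) = 1)
    (hVV : ∀ i j : Fin k, 0 < (V * Vᵀ) i j)
    (hne : ∃ Z : Matrix (Fin n) (Fin k) ℝ, Zᵀ * Z = 1 ∧ ∀ i j, 0 ≤ Z i j) :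
    ∃ ρ : ℝ, 0 < ρ ∧
      ∀ X : Matrix (Fin n) (Fin k) ℝ,
        (∀ j, ∑ i, (X i j) ^ 2 = 1) → (∀ i j, 0 ≤ X i j) →
        ∃ Y : Matrix (Fin n) (Fin k) ℝ, (Yᵀ * Y = 1 ∧ ∀ i j, 0 ≤ Y i j) ∧
          Real.sqrt (∑ i, ∑ j, ((X - Y) i j) ^ 2) ≤
            ρ * Real.sqrt ((∑ i, ∑ j, ((X * V) i j) ^ 2) - 1) := by
  by_cases hk : k = 0
  · subst hk
    refine ⟨1, one_pos, fun X hX1 hX0 => ⟨X, ⟨?_, fun i j => hX0 i j⟩, ?_⟩⟩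
    · ext a b; exact a.elim0
    · have h0 : (∑ i : Fin n, ∑ j : Fin 0, ((X - X) i j)^2) = 0 := by simp
      rw [h0, Real.sqrt_zero]
      positivity
  -- main case : k ≥ 1
  have hkpos : 0 < k := Nat.pos_of_ne_zero hk
  haveI : Nonempty (Fin k) := ⟨⟨0, hkpos⟩⟩
  obtain ⟨ω, hω, hωle⟩ : ∃ ω > 0, ∀ a b : Fin k, ω ≤ (V * Vᵀ) a b := by
    refine ⟨Finset.univ.inf' Finset.univ_nonempty
      (fun p : Fin k × Fin k => (V * Vᵀ) p.1 p.2), ?_, ?_⟩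
    · show (0:ℝ) < _
      rw [Finset.lt_inf'_iff]
      exact fun p _ => hVV p.1 p.2
    · intro a b
      exact Finset.inf'_le _ (Finset.mem_univ (a, b))
  have hVsum : (∑ i, ∑ j, (V i j) ^ 2) = 1 := by
    have hS : (0:ℝ) ≤ ∑ i, ∑ j, (V i j) ^ 2 := by positivity
    have h := Real.sq_sqrt hS
    rw [hV, one_pow] at h
    exact h.symm
  obtain ⟨Z, hZ1, hZ0⟩ := hne
  set ρ : ℝ := Real.sqrt ((8 * k + 2) / ω) with hρdef
  have hρpos : 0 < ρ := Real.sqrt_pos.mpr (by positivity)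
  refine ⟨ρ, hρpos, fun X hX1 hX0 => ?_⟩
  -- notation
  set T : ℝ := ∑ i, ∑ j, ((X * V) i j) ^ 2 with hT
  set G : Fin k → Fin k → ℝ := fun a b => ∑ i, X i a * X i b with hGdef
  have hGnn : ∀ a b, 0 ≤ G a b := fun a b =>
    Finset.sum_nonneg fun i _ => mul_nonneg (hX0 i a) (hX0 i b)
  have hGdiag : ∀ a, G a a = 1 := by
    intro a
    rw [← hX1 a]
    exact Finset.sum_congr rfl fun i _ => (sq (X i a)).symm
  set e : Fin k → ℝ := fun a => ∑ b ∈ Finset.univ.erase a, G a b with hedef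
  have henn : ∀ a, 0 ≤ e a := fun a => Finset.sum_nonneg fun b _ => hGnn a b
  set s : ℝ := ∑ a, e a with hsdef
  have hsnn : 0 ≤ s := Finset.sum_nonneg fun a _ => henn a
  -- T - 1 ≥ ω * s
  have hkeyT : T = 1 + ∑ a, ∑ b ∈ Finset.univ.erase a, G a b * (V * Vᵀ) a b := by
    have h0 := stmt7_key_id n k r X V
    rw [hT, h0]
    have : ∀ a : Fin k, (∑ b, G a b * (V * Vᵀ) a b)
        = (V * Vᵀ) a a + ∑ b ∈ Finset.univ.erase a, G a b * (V * Vᵀ) a b := by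
      intro a
      rw [← Finset.add_sum_erase _ _ (Finset.mem_univ a), hGdiag a, one_mul]
    calc (∑ a, ∑ b, G a b * (V * Vᵀ) a b)
        = ∑ a, ((V * Vᵀ) a a + ∑ b ∈ Finset.univ.erase a, G a b * (V * Vᵀ) a b) :=
          Finset.sum_congr rfl fun a _ => this a
      _ = (∑ a, (V * Vᵀ) a a) + ∑ a, ∑ b ∈ Finset.univ.erase a, G a b * (V * Vᵀ) a b :=
          Finset.sum_add_distrib
      _ = 1 + ∑ a, ∑ b ∈ Finset.univ.erase a, G a b * (V * Vᵀ) a b := by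
          congr 1
          rw [← hVsum]
          exact Finset.sum_congr rfl fun a _ => by
            simp [Matrix.mul_apply, Matrix.transpose_apply, sq]
  have hTlb : ω * s ≤ T - 1 := by
    rw [hkeyT]
    have : ω * s = ∑ a, ∑ b ∈ Finset.univ.erase a, ω * G a b := by
      rw [hsdef, Finset.mul_sum]
      exact Finset.sum_congr rfl fun a _ => by rw [hedef, Finset.mul_sum]
    rw [this]
    have hle : ∀ a : Fin k, ∀ b ∈ Finset.univ.erase a, ω * G a b ≤ G a b * (V * Vᵀ) a b := by
      intro a b _
      rw [mul_comm]
      exact mul_le_mul_of_nonneg_left (hωle a b) (hGnn a b)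
    simp only [add_sub_cancel_left]
    exact Finset.sum_le_sum fun a _ => Finset.sum_le_sum (hle a)
  have hTnn : 0 ≤ T - 1 := le_trans (by positivity) hTlb
  -- reduction: suffices dist² ≤ ((8k+2)/ω) * (T-1)
  have hred : ∀ Y : Matrix (Fin n) (Fin k) ℝ,
      (∑ i, ∑ j, ((X - Y) i j) ^ 2) ≤ ((8 * k + 2) / ω) * (T - 1) →
      Real.sqrt (∑ i, ∑ j, ((X - Y) i j) ^ 2) ≤ ρ * Real.sqrt (T - 1) := by
    intro Y hY
    have h1 : Real.sqrt (∑ i, ∑ j, ((X - Y) i j) ^ 2)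
        ≤ Real.sqrt (((8 * k + 2) / ω) * (T - 1)) := Real.sqrt_le_sqrt hY
    rwa [Real.sqrt_mul (by positivity : (0:ℝ) ≤ (8 * k + 2) / ω), ← hρdef] at h1
  by_cases hA : ∀ j : Fin k, e j ≤ 1 / 2
  · -- good case: argmax construction
    have hm : ∀ i : Fin n, ∃ j : Fin k, ∀ l : Fin k, X i l ≤ X i j := by
      intro i
      obtain ⟨j, -, hj⟩ := Finset.exists_max_image Finset.univ (fun l => X i l) ⟨⟨0, hkpos⟩, Finset.mem_univ _⟩
      exact ⟨j, fun l => hj l (Finset.mem_univ l)⟩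
    choose m hmax using hm
    set nz : Fin k → ℝ := fun j => ∑ i, (if m i = j then X i j ^ 2 else 0) with hnzdef
    set rest : Fin k → ℝ := fun j => ∑ i, (if m i = j then 0 else X i j ^ 2) with hrestdef
    have hnznn : ∀ j, 0 ≤ nz j := fun j =>
      Finset.sum_nonneg fun i _ => by split <;> positivity
    have hrestnn : ∀ j, 0 ≤ rest j := fun j =>
      Finset.sum_nonneg fun i _ => by split <;> positivity
    have hsplit : ∀ j, nz j + rest j = 1 := by
      intro j
      rw [hnzdef, hrestdef, ← Finset.sum_add_distrib, ← hX1 j]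
      exact Finset.sum_congr rfl fun i _ => by split <;> ring
    have hrest_le : ∀ j, rest j ≤ e j := by
      intro j
      have step : ∀ i : Fin n, (if m i = j then 0 else X i j ^ 2)
          ≤ ∑ b ∈ Finset.univ.erase j, X i j * X i b := by
        intro i
        by_cases h : m i = j
        · rw [if_pos h]
          exact Finset.sum_nonneg fun b _ => mul_nonneg (hX0 i j) (hX0 i b)
        · rw [if_neg h]
          have h1 : X i j ^ 2 ≤ X i j * X i (m i) := by
            rw [sq]
            exact mul_le_mul_of_nonneg_left (hmax i j) (hX0 i j)
          have h2 : X i j * X i (m i) ≤ ∑ b ∈ Finset.univ.erase j, X i j * X i b :=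
            Finset.single_le_sum (f := fun b => X i j * X i b)
              (fun b _ => mul_nonneg (hX0 i j) (hX0 i b))
              (Finset.mem_erase.mpr ⟨h, Finset.mem_univ _⟩)
          exact h1.trans h2
      calc rest j ≤ ∑ i, ∑ b ∈ Finset.univ.erase j, X i j * X i b :=
            Finset.sum_le_sum fun i _ => step i
        _ = ∑ b ∈ Finset.univ.erase j, ∑ i, X i j * X i b := Finset.sum_comm
        _ = e j := rfl
    have hnzlb : ∀ j, 1 / 2 ≤ nz j := by
      intro j
      have := hsplit j
      have := hrest_le j
      have := hA j
      linarith
    have hnzub : ∀ j, nz j ≤ 1 := by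
      intro j
      have := hsplit j
      have := hrestnn j
      linarith
    set c : Fin k → ℝ := fun j => Real.sqrt (nz j) with hcdef
    have hcpos : ∀ j, 0 < c j := fun j => Real.sqrt_pos.mpr (by linarith [hnzlb j])
    have hc2 : ∀ j, c j ^ 2 = nz j := fun j => Real.sq_sqrt (hnznn j)
    have hcle1 : ∀ j, c j ≤ 1 := fun j => Real.sqrt_le_one.mpr (hnzub j)
    set Y : Matrix (Fin n) (Fin k) ℝ :=
      Matrix.of (fun i j => (if m i = j then X i j else 0) / c j) with hYdef
    have hYapp : ∀ i j, Y i j = (if m i = j then X i j else 0) / c j := fun i j => rfl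
    have hY0 : ∀ i j, 0 ≤ Y i j := by
      intro i j
      rw [hYapp]
      apply div_nonneg _ (Real.sqrt_nonneg _)
      split
      · exact hX0 i j
      · exact le_rfl
    -- Y has unit columns: sum of squares
    have hYsq : ∀ j, (∑ i, Y i j * Y i j) = 1 := by
      intro j
      have hterm : ∀ i, Y i j * Y i j = (if m i = j then X i j ^ 2 else 0) / nz j := by
        intro i
        rw [hYapp, div_mul_div_comm, ← sq, ← sq, hc2]
        congr 1
        split <;> simp [sq]
      rw [Finset.sum_congr rfl fun i _ => hterm i, ← Finset.sum_div]
      exact div_self (by linarith [hnzlb j])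
    have hYfeas : Yᵀ * Y = 1 := by
      ext a b
      rw [Matrix.mul_apply]
      simp only [Matrix.transpose_apply]
      by_cases hab : a = b
      · subst hab
        rw [Matrix.one_apply_eq]
        exact hYsq a
      · rw [Matrix.one_apply_ne hab]
        apply Finset.sum_eq_zero
        intro i _
        rw [hYapp, hYapp]
        by_cases ha : m i = a
        · rw [if_neg (fun h => hab (ha.symm.trans h))]
          simp
        · rw [if_neg ha]
          simp
    -- distance per column
    have hXY : ∀ j, (∑ i, X i j * Y i j) = c j := by
      intro j
      have hterm : ∀ i, X i j * Y i j = (if m i = j then X i j ^ 2 else 0) / c j := by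
        intro i
        rw [hYapp, mul_div_assoc']
        congr 1
        split <;> simp [sq]
      rw [Finset.sum_congr rfl fun i _ => hterm i, ← Finset.sum_div]
      show nz j / c j = c j
      rw [← hc2 j, sq, mul_div_assoc, div_self (ne_of_gt (hcpos j)), mul_one]
    have hcol : ∀ j, (∑ i, ((X - Y) i j) ^ 2) = 2 - 2 * c j := by
      intro j
      have expand : ∀ i, ((X - Y) i j) ^ 2
          = X i j ^ 2 - 2 * (X i j * Y i j) + Y i j * Y i j := by
        intro i
        simp only [Matrix.sub_apply]
        ring
      calc (∑ i, ((X - Y) i j) ^ 2)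
          = ∑ i, (X i j ^ 2 - 2 * (X i j * Y i j) + Y i j * Y i j) :=
            Finset.sum_congr rfl fun i _ => expand i
        _ = (∑ i, (X i j ^ 2 - 2 * (X i j * Y i j))) + ∑ i, Y i j * Y i j :=
            Finset.sum_add_distrib
        _ = ((∑ i, X i j ^ 2) - ∑ i, 2 * (X i j * Y i j)) + ∑ i, Y i j * Y i j :=
            by rw [Finset.sum_sub_distrib]
        _ = (1 - 2 * (∑ i, X i j * Y i j)) + 1 := by
            rw [hX1 j, ← Finset.mul_sum, hYsq j]
        _ = 2 - 2 * c j := by rw [hXY j]; ring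
    have hcolle : ∀ j, (∑ i, ((X - Y) i j) ^ 2) ≤ 2 * e j := by
      intro j
      rw [hcol j]
      have h1 : c j ^ 2 ≤ c j := by
        nlinarith [hcpos j, hcle1 j]
      have h2 : 1 - nz j = rest j := by linarith [hsplit j]
      have h3 := hrest_le j
      have h4 := hc2 j
      nlinarith
    refine ⟨Y, ⟨hYfeas, hY0⟩, hred Y ?_⟩
    calc (∑ i, ∑ j, ((X - Y) i j) ^ 2)
        = ∑ j, ∑ i, ((X - Y) i j) ^ 2 := Finset.sum_comm
      _ ≤ ∑ j : Fin k, 2 * e j := Finset.sum_le_sum fun j _ => hcolle j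
      _ = 2 * s := by rw [hsdef, Finset.mul_sum]
      _ ≤ (2 / ω) * (T - 1) := by
          rw [div_mul_eq_mul_div, le_div_iff₀ hω]
          nlinarith [hTlb]
      _ ≤ ((8 * k + 2) / ω) * (T - 1) := by
          have h2 : (2:ℝ) / ω ≤ (8 * (k:ℝ) + 2) / ω := by
            apply (div_le_div_iff_of_pos_right hω).mpr
            have : (0:ℝ) ≤ (k:ℝ) := Nat.cast_nonneg k
            linarith
          exact mul_le_mul_of_nonneg_right h2 hTnn
  · -- bad case: use the fixed feasible point Z
    push_neg at hA
    obtain ⟨j0, hj0⟩ := hA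
    have hs2 : 1 / 2 ≤ s := by
      have : e j0 ≤ s := Finset.single_le_sum (f := e) (fun a _ => henn a) (Finset.mem_univ j0)
      linarith
    have hT2 : ω / 2 ≤ T - 1 := by
      calc ω / 2 = ω * (1 / 2) := by ring
        _ ≤ ω * s := mul_le_mul_of_nonneg_left hs2 hω.le
        _ ≤ T - 1 := hTlb
    have hZcol : ∀ j, (∑ i, Z i j ^ 2) = 1 := by
      intro j
      have h := congrFun (congrFun hZ1 j) j
      rw [Matrix.mul_apply] at h
      simp only [Matrix.transpose_apply, Matrix.one_apply_eq] at h
      rw [← h]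
      exact Finset.sum_congr rfl fun i _ => sq (Z i j)
    have hcolB : ∀ j, (∑ i, ((X - Z) i j) ^ 2) ≤ 4 := by
      intro j
      calc (∑ i, ((X - Z) i j) ^ 2)
          ≤ ∑ i, (2 * X i j ^ 2 + 2 * Z i j ^ 2) := by
            apply Finset.sum_le_sum
            intro i _
            simp only [Matrix.sub_apply]
            nlinarith [sq_nonneg (X i j + Z i j)]
        _ = 2 * (∑ i, X i j ^ 2) + 2 * (∑ i, Z i j ^ 2) := by
            rw [Finset.sum_add_distrib, Finset.mul_sum, Finset.mul_sum]
        _ = 4 := by rw [hX1 j, hZcol j]; norm_num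
    refine ⟨Z, ⟨hZ1, hZ0⟩, hred Z ?_⟩
    calc (∑ i, ∑ j, ((X - Z) i j) ^ 2)
        = ∑ j, ∑ i, ((X - Z) i j) ^ 2 := Finset.sum_comm
      _ ≤ ∑ j : Fin k, (4:ℝ) := Finset.sum_le_sum fun j _ => hcolB j
      _ = 4 * k := by simp [mul_comm]
      _ ≤ ((8 * k + 2) / ω) * (ω / 2) := by
          have hω' : ω ≠ 0 := ne_of_gt hω
          have heq : ((8 * (k:ℝ) + 2) / ω) * (ω / 2) = 4 * (k:ℝ) + 1 := by
            field_simp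
            ring
          rw [heq]
          have : (0:ℝ) ≤ (k:ℝ) := Nat.cast_nonneg k
          linarith
      _ ≤ ((8 * k + 2) / ω) * (T - 1) :=
          mul_le_mul_of_nonneg_left hT2 (by positivity)
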